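/- Let F, F̃ ∈ ℤ[x] with F(x) = F̃(x²), and let p ∈ ℤ[x] be an irreducible factor of F such that p(x) = p(-x), so that p(x) = p̃(x²) for some p̃ ∈ ℤ[x]. Then the multiplicity of p(x) as a factor of F(x) equals the multiplicity of p̃(x) as a factor of F̃(x). -/

import Mathlib

open Polynomial

private lemma coeff_comp_neg_X (h : Polynomial ℤ) (n : ℕ) :
    (h.comp (-X)).coeff n = (-1) ^ n * h.coeff n := by
  induction h using Polynomial.induction_on' with
  | add f g hf hg => simp [add_comp, hf, hg, mul_add]
  | monomial i a =>
      rw [monomial_comp]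
      have hC : (-X : Polynomial ℤ) ^ i = C ((-1) ^ i) * X ^ i := by
        rw [neg_pow]
        simp
      rw [hC, ← mul_assoc, ← C_mul, coeff_C_mul, coeff_monomial, coeff_X_pow]
      rcases eq_or_ne i n with rfl | hin
      · simp [mul_comm]
      · simp [hin, Ne.symm hin]

private lemma even_of_comp_neg (g : Polynomial ℤ) (hg : g.comp (-X) = g) :
    expand ℤ 2 (contract 2 g) = g := by
  ext n
  rw [coeff_expand (by norm_num)]
  split_ifs with h2
  · rw [coeff_contract (by norm_num), Nat.div_mul_cancel h2]
  · have := coeff_comp_neg_X g n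
    rw [hg] at this
    have hodd : (-1 : ℤ) ^ n = -1 := Odd.neg_one_pow (Nat.odd_iff.mpr (by omega))
    rw [hodd] at this
    omega

/-- If `F(x) = F̃(x²)` and `p` is an irreducible factor of `F` with `p(x) = p̃(x²)`, then the
multiplicity of `p` in `F` equals the multiplicity of `p̃` in `F̃`. -/
theorem even_poly_factor_multiplicity (F Ft p pt : Polynomial ℤ)
    (hF : F = Ft.comp (X ^ 2)) (hFne : F ≠ 0) (hirr : Irreducible p)
    (hdvd : p ∣ F) (hsym : p.comp (-X) = p) (hp : p = pt.comp (X ^ 2)) :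
    ∀ m : ℕ, p ^ m ∣ F ↔ pt ^ m ∣ Ft := by
  have hpe : p = expand ℤ 2 pt := hp
  have hFe : F = expand ℤ 2 Ft := hF
  have hpne : p ≠ 0 := hirr.ne_zero
  have key : ∀ m : ℕ, ∀ G : Polynomial ℤ, p ^ m ∣ expand ℤ 2 G → pt ^ m ∣ G := by
    intro m
    induction m with
    | zero => intro G _; exact one_dvd _
    | succ m ih =>
      intro G hG
      obtain ⟨h, hh⟩ := hG
      set g : Polynomial ℤ := p ^ m * h with hgdef
      have heq : expand ℤ 2 G = p * g := by rw [hh, hgdef, pow_succ, mul_comm (p^m) p, mul_assoc]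
      have hgsym : g.comp (-X) = g := by
        have h1 : (expand ℤ 2 G).comp (-X) = expand ℤ 2 G := by
          rw [expand_eq_comp_X_pow, comp_assoc, X_pow_comp, neg_pow]
          norm_num
        have h2 : (expand ℤ 2 G).comp (-X) = p * g.comp (-X) := by
          rw [heq, mul_comp, hsym]
        exact mul_left_cancel₀ hpne (h2.symm.trans (h1.trans heq))
      have hgexp : expand ℤ 2 (contract 2 g) = g := even_of_comp_neg g hgsym
      have hGfac : G = pt * contract 2 g := by
        apply expand_injective (R := ℤ) (n := 2) (by norm_num)
        rw [map_mul, hgexp, ← hpe, heq]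
      have hdvdg : p ^ m ∣ expand ℤ 2 (contract 2 g) := by
        rw [hgexp, hgdef]; exact Dvd.intro h rfl
      have := ih (contract 2 g) hdvdg
      rw [hGfac, pow_succ, mul_comm (pt ^ m) pt]
      exact mul_dvd_mul_left pt this
  intro m
  constructor
  · intro hm
    exact key m Ft (hFe ▸ hm)
  · intro hm
    rw [hFe, hpe, ← map_pow]
    exact _root_.map_dvd (expand ℤ 2) hm
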